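/- Let B, C, D ∈ ℂ. If |z − u|² − 2·Re[(u − z)·(C·(z + u) + D)] + |B|² ≥ 0 for all u, z ∈ ℂ, then C = 0 and |D| ≤ |B|. -/

import Mathlib

open Complex

/-- if `|z - u|² - 2 Re[(u - z)(C(z + u) + D)] + |B|² ≥ 0` for all `u, z ∈ ℂ`,
then `C = 0` and `|D| ≤ |B|`. -/
theorem quadratic_positivity (B C D : ℂ)
    (h : ∀ u z : ℂ, (‖z - u‖) ^ 2
        - 2 * ((u - z) * (C * (z + u) + D)).re + (‖B‖) ^ 2 ≥ 0) :
    C = 0 ∧ ‖D‖ ≤ ‖B‖ := by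
  have key : ∀ w s : ℂ, (‖w‖) ^ 2 + 2 * (w * (C * s + D)).re
      + (‖B‖) ^ 2 ≥ 0 := by
    intro w s
    have := h ((s - w) / 2) ((s + w) / 2)
    rw [show (s + w) / 2 - (s - w) / 2 = w by ring,
        show (s - w) / 2 - (s + w) / 2 = -w by ring,
        show (s + w) / 2 + (s - w) / 2 = s by ring] at this
    simp only [Complex.neg_re, neg_mul, sub_neg_eq_add, Complex.mul_re, Complex.add_re,
      Complex.mul_im, Complex.add_im] at this ⊢
    linarith
  have hC : C = 0 := by
    by_contra hC
    set r : ℝ := -(2 + (‖B‖) ^ 2 + 2 * D.re) / 2 with hr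
    have hk := key 1 ((r : ℂ) / C)
    rw [show (1 : ℂ) * (C * ((r : ℂ) / C) + D) = (r : ℂ) + D by field_simp] at hk
    simp only [Complex.add_re, Complex.ofReal_re, map_one, norm_one, one_pow] at hk
    rw [hr] at hk
    linarith
  subst hC
  have hk := key (-(starRingEnd ℂ) D) 0
  have e : (-(starRingEnd ℂ) D * ((0 : ℂ) * 0 + D)).re = -((‖D‖) ^ 2) := by
    rw [show -(starRingEnd ℂ) D * ((0 : ℂ) * 0 + D) = -(D * (starRingEnd ℂ) D) by ring,
        Complex.mul_conj]
    simp [Complex.sq_norm, Complex.normSq_nonneg]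
  rw [e, show ‖-(starRingEnd ℂ) D‖ = ‖D‖ by simp] at hk
  have h2 : (‖D‖) ^ 2 ≤ (‖B‖) ^ 2 := by linarith
  exact ⟨rfl, (pow_le_pow_iff_left₀ (norm_nonneg _) (norm_nonneg _) two_ne_zero).mp h2⟩
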